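/- Let Vᵢ, gᵢ, Rᵢ, R, g be as in the connected sum setup, with n ≥ 2, each gᵢ ≥ 1, each Rᵢ nonnegative and nondecreasing with Rᵢ(1) = 1, and additionally Rᵢ(gᵢ) = Vᵢ(0) ≥ 1 and Rᵢ(gᵢ + 1) = Vᵢ(-1) = Vᵢ(1) + 1 ≥ 1 and Rᵢ(gᵢ + 2) = Vᵢ(-2) = Vᵢ(2) + 2 ≥ 2. Then R(g + 1) ≥ 2. -/

import Mathlib

/-- Connected-sum setup: with `Rᵢ(j) = Vᵢ(gᵢ - j)` nonnegative, nondecreasing,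
`Rᵢ(1) = 1`, `Rᵢ(gᵢ) = Vᵢ(0) ≥ 1`, `Rᵢ(gᵢ+1) = Vᵢ(-1) ≥ 1`,
`Rᵢ(gᵢ+2) = Vᵢ(-2) ≥ 2`, every tuple `(j₁,…,jₙ)` with `Σ jᵢ = g + 1`
has `Σ Rᵢ(jᵢ) ≥ 2`, i.e. `R(g+1) ≥ 2`. -/
theorem R_g_add_one_ge_two (n : ℕ) (hn : 2 ≤ n)
    (V : Fin n → ℤ → ℕ) (gv : Fin n → ℕ) (hg : ∀ i, 1 ≤ gv i)
    (hmono : ∀ i, ∀ j j' : ℤ, j ≤ j' →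
      V i ((gv i : ℤ) - j) ≤ V i ((gv i : ℤ) - j'))
    (hone : ∀ i, V i ((gv i : ℤ) - 1) = 1)
    (hVg : ∀ i, 1 ≤ V i 0)
    (hVg1 : ∀ i, 1 ≤ V i (-1))
    (hVg2 : ∀ i, 2 ≤ V i (-2)) :
    ∀ j : Fin n → ℤ, (∑ i, j i) = (∑ i, (gv i : ℤ)) + 1 →
      2 ≤ ∑ i, V i ((gv i : ℤ) - j i) := by
  intro j hsum
  by_cases hA : ∃ k, (gv k : ℤ) + 2 ≤ j k
  · obtain ⟨k, hk⟩ := hA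
    have h2 : 2 ≤ V k ((gv k : ℤ) - j k) := by
      have hm := hmono k ((gv k : ℤ) + 2) (j k) hk
      have : (gv k : ℤ) - ((gv k : ℤ) + 2) = -2 := by ring
      rw [this] at hm
      exact le_trans (hVg2 k) hm
    exact le_trans h2
      (Finset.single_le_sum (f := fun i => V i ((gv i : ℤ) - j i))
        (fun i _ => Nat.zero_le _) (Finset.mem_univ k))
  · push_neg at hA
    have hex : ∃ k, (gv k : ℤ) + 1 ≤ j k := by
      by_contra h
      push_neg at h
      have hs : ∑ i, j i ≤ ∑ i, (gv i : ℤ) :=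
        Finset.sum_le_sum (fun i _ => by have := h i; linarith)
      linarith
    obtain ⟨k, hk⟩ := hex
    have hjk : j k = (gv k : ℤ) + 1 := le_antisymm (by linarith [hA k]) hk
    have h1 : 1 ≤ V k ((gv k : ℤ) - j k) := by
      rw [hjk]
      have : (gv k : ℤ) - ((gv k : ℤ) + 1) = -1 := by ring
      rw [this]
      exact hVg1 k
    have hex2 : ∃ i ∈ Finset.univ.erase k, 1 ≤ j i := by
      by_contra h
      push_neg at h
      have hs : ∑ i ∈ Finset.univ.erase k, j i ≤
          ∑ i ∈ Finset.univ.erase k, (0 : ℤ) :=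
        Finset.sum_le_sum (fun i hi => by have := h i hi; linarith)
      rw [Finset.sum_const_zero] at hs
      have hsplit : j k + ∑ i ∈ Finset.univ.erase k, j i = ∑ i, j i :=
        Finset.add_sum_erase _ _ (Finset.mem_univ k)
      have hsplitg : (gv k : ℤ) + ∑ i ∈ Finset.univ.erase k, (gv i : ℤ) =
          ∑ i, (gv i : ℤ) :=
        Finset.add_sum_erase _ (fun i => (gv i : ℤ)) (Finset.mem_univ k)
      have hpos : 0 < ∑ i ∈ Finset.univ.erase k, (gv i : ℤ) := by
        apply Finset.sum_pos (fun i _ => by exact_mod_cast hg i)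
        have : 1 < (Finset.univ : Finset (Fin n)).card := by
          simp [Finset.card_univ]; omega
        obtain ⟨m, hm⟩ := Finset.exists_mem_ne this k
        exact ⟨m, Finset.mem_erase.mpr ⟨hm.2, Finset.mem_univ m⟩⟩
      linarith
    obtain ⟨m, hm, hm1⟩ := hex2
    have h2 : 1 ≤ V m ((gv m : ℤ) - j m) := by
      have hmm := hmono m 1 (j m) hm1
      rw [hone m] at hmm
      exact hmm
    calc 2 ≤ V k ((gv k : ℤ) - j k) + V m ((gv m : ℤ) - j m) := by omega
      _ ≤ V k ((gv k : ℤ) - j k) +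
          ∑ i ∈ Finset.univ.erase k, V i ((gv i : ℤ) - j i) :=
        Nat.add_le_add_left
          (Finset.single_le_sum (f := fun i => V i ((gv i : ℤ) - j i))
            (fun i _ => Nat.zero_le _) hm) _
      _ = ∑ i, V i ((gv i : ℤ) - j i) :=
        Finset.add_sum_erase _ (fun i => V i ((gv i : ℤ) - j i)) (Finset.mem_univ k)
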